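/- Let β ∈ (0,1), let (η_k)_{k≥0} and (η̂_k)_{k≥0} be sequences of positive reals, and let B ⊆ ℕ be a set of indices such that: η̂_k = η_k for k ∉ B; η̂_k ≤ β·η_k for k ∈ B; η_{k+1} = η̂_k/β for k ∉ B; and η_{k+1} = η̂_k for k ∈ B. Define A_0 = 0, a_k = (η_k + √(η_k² + 4 η_k A_k))/2, and A_{k+1} = A_k + a_k if k ∉ B, A_{k+1} = A_k + (η̂_k/η_k)·a_k if k ∈ B. Then for every N ≥ 1, A_N ≥ ((1−√β)²/(4(2−√β)²))·(Σ_{k=0}^{N−1} √η̂_k)². -/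

import Mathlib

/-- Lower bound on the Monteiro–Svaiter weights `A_N` in terms of all
accepted step sizes, under the coupled step-size and weight dynamics. -/
theorem stmt4
    (β : ℝ) (hβ0 : 0 < β) (hβ1 : β < 1)
    (η ηh : ℕ → ℝ) (hηpos : ∀ k, 0 < η k) (hηhpos : ∀ k, 0 < ηh k)
    (B : Set ℕ) [DecidablePred (· ∈ B)]
    (heq : ∀ k ∉ B, ηh k = η k) (hle : ∀ k ∈ B, ηh k ≤ β * η k)
    (hnext1 : ∀ k ∉ B, η (k + 1) = ηh k / β)
    (hnext2 : ∀ k ∈ B, η (k + 1) = ηh k)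
    (A a : ℕ → ℝ)
    (hA0 : A 0 = 0)
    (ha : ∀ k, a k = (η k + Real.sqrt ((η k) ^ 2 + 4 * η k * A k)) / 2)
    (hAn : ∀ k ∉ B, A (k + 1) = A k + a k)
    (hAb : ∀ k ∈ B, A (k + 1) = A k + (ηh k / η k) * a k)
    (N : ℕ) (hN : 1 ≤ N) :
    ((1 - Real.sqrt β) ^ 2 / (4 * (2 - Real.sqrt β) ^ 2)) *
        (∑ k ∈ Finset.range N, Real.sqrt (ηh k)) ^ 2
      ≤ A N := by
  set s := Real.sqrt β with hs
  have hs0 : 0 < s := Real.sqrt_pos.2 hβ0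
  have hs1 : s < 1 := by
    have : Real.sqrt β < Real.sqrt 1 := Real.sqrt_lt_sqrt hβ0.le hβ1
    simpa using this
  have h2s : 0 < 2 - s := by linarith
  obtain ⟨c, hc⟩ : ∃ x : ℝ, x = (1 - s) / (2 * (2 - s)) := ⟨_, rfl⟩
  obtain ⟨e, he⟩ : ∃ x : ℝ, x = s / (2 * (2 - s)) := ⟨_, rfl⟩
  have hc0 : 0 < c := by
    rw [hc]; apply div_pos <;> nlinarith
  have he0 : 0 < e := by
    rw [he]; apply div_pos <;> nlinarith
  -- A is nonnegative, a is positive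
  have hapos : ∀ k, η k / 2 ≤ a k := by
    intro k
    rw [ha k]
    have := Real.sqrt_nonneg ((η k) ^ 2 + 4 * η k * A k)
    linarith
  have hApos : ∀ k, 0 ≤ A k := by
    intro k
    induction k with
    | zero => rw [hA0]
    | succ n ih =>
      have han : 0 < a n := lt_of_lt_of_le (by linarith [hηpos n]) (hapos n)
      by_cases hB : n ∈ B
      · rw [hAb n hB]
        have : 0 ≤ (ηh n / η n) * a n := by
          have := hηpos n; have := hηhpos n; positivity
        linarith
      · rw [hAn n hB]; linarith
  -- lower bound on a
  have ha_lb : ∀ k, η k / 2 + Real.sqrt (η k) * Real.sqrt (A k) ≤ a k := by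
    intro k
    have h2 : 4 * η k * A k = (2 * Real.sqrt (η k) * Real.sqrt (A k)) ^ 2 := by
      rw [mul_pow, mul_pow, Real.sq_sqrt (hηpos k).le, Real.sq_sqrt (hApos k)]
      ring
    have h1 : 2 * Real.sqrt (η k) * Real.sqrt (A k)
        ≤ Real.sqrt ((η k) ^ 2 + 4 * η k * A k) := by
      have h3 := Real.sqrt_le_sqrt
        (show (2 * Real.sqrt (η k) * Real.sqrt (A k)) ^ 2
            ≤ (η k) ^ 2 + 4 * η k * A k by nlinarith [sq_nonneg (η k)])
      rwa [Real.sqrt_sq (by positivity)] at h3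
    rw [ha k]
    linarith
  -- step inequality, non-backtracking case
  have step_not : ∀ k ∉ B,
      Real.sqrt (A k) + Real.sqrt (η k) / 2 ≤ Real.sqrt (A (k + 1)) := by
    intro k hB
    have hsum : (Real.sqrt (A k) + Real.sqrt (η k) / 2) ^ 2 ≤ A (k + 1) := by
      rw [hAn k hB]
      have h1 := ha_lb k
      have hA := Real.sq_sqrt (hApos k)
      have hE := Real.sq_sqrt (hηpos k).le
      nlinarith [Real.sqrt_nonneg (A k), Real.sqrt_nonneg (η k), hηpos k]
    have := Real.sqrt_le_sqrt hsum
    rwa [Real.sqrt_sq (by positivity)] at this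
  -- step inequality, backtracking case: A is nondecreasing
  have step_B : ∀ k ∈ B, Real.sqrt (A k) ≤ Real.sqrt (A (k + 1)) := by
    intro k hB
    apply Real.sqrt_le_sqrt
    rw [hAb k hB]
    have han : 0 < a k := lt_of_lt_of_le (by linarith [hηpos k]) (hapos k)
    have : 0 ≤ (ηh k / η k) * a k := by
      have := hηpos k; have := hηhpos k; positivity
    linarith
  -- sqrt of ηh on B
  have hηhB : ∀ k ∈ B, Real.sqrt (ηh k) ≤ s * Real.sqrt (η k) := by
    intro k hB
    have h1 : Real.sqrt (ηh k) ≤ Real.sqrt (β * η k) :=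
      Real.sqrt_le_sqrt (hle k hB)
    rwa [Real.sqrt_mul hβ0.le] at h1
  -- sqrt of η (k+1) off B
  have hηnext : ∀ k ∉ B, Real.sqrt (η (k + 1)) = Real.sqrt (η k) / s := by
    intro k hB
    rw [hnext1 k hB, heq k hB, Real.sqrt_div (hηpos k).le]
  -- a 0 = η 0
  have ha0 : a 0 = η 0 := by
    rw [ha 0, hA0]
    rw [show (η 0) ^ 2 + 4 * η 0 * 0 = (η 0) ^ 2 by ring,
      Real.sqrt_sq (hηpos 0).le]
    ring
  -- key algebraic identities
  have key1 : c + e / s = 1 / 2 := by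
    rw [hc, he]; field_simp; ring
  have key2 : (c + e) * s = e := by
    rw [hc, he]; field_simp; try ring
  -- the invariant
  have inv : ∀ n, 1 ≤ n →
      c * (∑ k ∈ Finset.range n, Real.sqrt (ηh k)) + e * Real.sqrt (η n)
        ≤ Real.sqrt (A n) := by
    intro n hn
    induction n, hn using Nat.le_induction with
    | base =>
      simp only [Finset.sum_range_one]
      by_cases hB : (0 : ℕ) ∈ B
      · have hA1 : A 1 = ηh 0 := by
          rw [hAb 0 hB, hA0, ha0]
          field_simp [(hηpos 0).ne']
          ring
        have hη1 : η 1 = ηh 0 := hnext2 0 hB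
        rw [hA1, hη1]
        have hnn := Real.sqrt_nonneg (ηh 0)
        have hce : c + e ≤ 1 := by
          rw [hc, he]
          rw [← add_div, div_le_one (by positivity)]
          nlinarith
        nlinarith
      · have hA1 : A 1 = η 0 := by rw [hAn 0 hB, hA0, ha0]; ring
        have hηh0 : ηh 0 = η 0 := heq 0 hB
        rw [hA1, hηh0, hηnext 0 hB]
        have hnn := Real.sqrt_nonneg (η 0)
        have hes : e * (Real.sqrt (η 0) / s) = (1 / 2 - c) * Real.sqrt (η 0) := by
          rw [he, hc]; field_simp; ring
        rw [hes]
        nlinarith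
    | succ n hn ih =>
      rw [Finset.sum_range_succ]
      by_cases hB : n ∈ B
      · have hη1 : η (n + 1) = ηh n := hnext2 n hB
        rw [hη1]
        have h1 := step_B n hB
        have h2 := hηhB n hB
        have h3 : (c + e) * Real.sqrt (ηh n) ≤ e * Real.sqrt (η n) := by
          calc (c + e) * Real.sqrt (ηh n) ≤ (c + e) * (s * Real.sqrt (η n)) := by
                apply mul_le_mul_of_nonneg_left h2 (by positivity)
            _ = ((c + e) * s) * Real.sqrt (η n) := by ring
            _ = e * Real.sqrt (η n) := by rw [key2]
        linarith
      · have hηh : ηh n = η n := heq n hB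
        rw [hηh, hηnext n hB]
        have h1 := step_not n hB
        have hnn := Real.sqrt_nonneg (η n)
        have hes : e * (Real.sqrt (η n) / s) = (1 / 2 - c) * Real.sqrt (η n) := by
          rw [he, hc]; field_simp; ring
        rw [hes]
        nlinarith [mul_nonneg he0.le hnn]
  -- conclude
  have hinvN := inv N hN
  set S := ∑ k ∈ Finset.range N, Real.sqrt (ηh k) with hS
  have hSnn : 0 ≤ S :=
    Finset.sum_nonneg fun k _ => Real.sqrt_nonneg _
  have hcS : c * S ≤ Real.sqrt (A N) := by
    have := mul_nonneg he0.le (Real.sqrt_nonneg (η N))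
    linarith
  have hcSnn : 0 ≤ c * S := mul_nonneg hc0.le hSnn
  have hsq : (c * S) ^ 2 ≤ A N := by
    have h := pow_le_pow_left₀ hcSnn hcS 2
    rwa [Real.sq_sqrt (hApos N)] at h
  have hcc : (1 - s) ^ 2 / (4 * (2 - s) ^ 2) = c ^ 2 := by
    have hden : (2 * (2 - s)) ^ 2 = 4 * (2 - s) ^ 2 := by ring
    rw [hc, div_pow, hden]
  calc ((1 - s) ^ 2 / (4 * (2 - s) ^ 2)) * S ^ 2
      = (c * S) ^ 2 := by rw [hcc, mul_pow]
    _ ≤ A N := hsq
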